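/- For every integer n ≥ 2 and every ε ∈ (0,1) there exists δ > 0 (depending only on n and ε) with the following property: there do not exist DER data f₁, …, f_{n+2} on the unit sphere S^{n−1} ⊆ ℝⁿ such that ⟨f₁, f_i⟩ < −ε for every i with 3 ≤ i ≤ n+2, ⟨f_i, f_j⟩ < δ for all i ≠ j, and sup_{x ∈ S^{n−1}} f₂(x) > ε. -/

import Mathlib

open scoped InnerProductSpace

open Filter Topology

set_option maxHeartbeats 1000000

noncomputable section

/-- DER data on the unit sphere of `EuclideanSpace ℝ (Fin n)`: a finite family of
nonempty compact subsets of the sphere together with nonnegative weights summing to at most 1. -/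
structure DERData (n : ℕ) where
  m : ℕ
  w : Fin m → ℝ
  A : Fin m → Set (EuclideanSpace ℝ (Fin n))
  nonempty' : ∀ α, (A α).Nonempty
  compact' : ∀ α, IsCompact (A α)
  subset_sphere : ∀ α, A α ⊆ Metric.sphere (0 : EuclideanSpace ℝ (Fin n)) 1
  nonneg : ∀ α, 0 ≤ w α
  sum_le_one : ∑ α, w α ≤ 1

/-- The DER function of DER data: `f(x) = -∑ a_α cos d(A_α, x) = -∑ a_α sup_{a ∈ A_α} ⟪a, x⟫`. -/
def DERData.toFun {n : ℕ} (f : DERData n) (x : EuclideanSpace ℝ (Fin n)) : ℝ :=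
  -∑ α, f.w α * sSup ((fun a => ⟪a, x⟫_ℝ) '' f.A α)

/-- The scalar product of two DER data:
`⟨f,g⟩ = ∑_{α,β} a_α b_β cos d(A_α, B_β) = ∑_{α,β} a_α b_β sup_{a ∈ A_α, b ∈ B_β} ⟪a, b⟫`. -/
def DERData.sprod {n : ℕ} (f g : DERData n) : ℝ :=
  ∑ α, ∑ β, f.w α * g.w β * sSup (Set.image2 (fun a b => ⟪a, b⟫_ℝ) (f.A α) (g.A β))


/-- Lemma 5.1 (round-sphere case): for `n ≥ 2` and `ε ∈ (0,1)` there is `δ > 0` such that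
there are no DER data `f₁, …, f_{n+2}` on `S^{n-1}` with `⟨f₁, f_i⟩ < -ε` for `i ≥ 3`,
`⟨f_i, f_j⟩ < δ` for `i ≠ j`, and `sup f₂ > ε`. -/


lemma proj_inner {E : Type*} [NormedAddCommGroup E] [InnerProductSpace ℝ E]
    (c a b : E) (hc : c ≠ 0) :
    ⟪a - (⟪c, a⟫_ℝ / ‖c‖^2) • c, b - (⟪c, b⟫_ℝ / ‖c‖^2) • c⟫_ℝ
      = ⟪a, b⟫_ℝ - ⟪c, a⟫_ℝ * ⟪c, b⟫_ℝ / ‖c‖^2 := by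
  have hc2 : ‖c‖^2 ≠ 0 := pow_ne_zero _ (norm_ne_zero_iff.mpr hc)
  simp only [inner_sub_left, inner_sub_right, real_inner_smul_left, real_inner_smul_right,
    real_inner_self_eq_norm_sq, real_inner_comm c a, real_inner_comm c b]
  field_simp
  ring

lemma proj_orth {E : Type*} [NormedAddCommGroup E] [InnerProductSpace ℝ E]
    (c a : E) (hc : c ≠ 0) :
    ⟪c, a - (⟪c, a⟫_ℝ / ‖c‖^2) • c⟫_ℝ = 0 := by
  have hc2 : ‖c‖^2 ≠ 0 := pow_ne_zero _ (norm_ne_zero_iff.mpr hc)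
  simp only [inner_sub_right, real_inner_smul_right, real_inner_self_eq_norm_sq]
  field_simp
  ring

lemma exact_lemma (n : ℕ) (hn : 2 ≤ n) (ε : ℝ) (hε : 0 < ε)
    (v : Fin (n+2) → EuclideanSpace ℝ (Fin n))
    (hnorm : ∀ i, ‖v i‖ ≤ 1)
    (h0 : ∀ i : Fin (n+2), 2 ≤ (i:ℕ) → ⟪v 0, v i⟫_ℝ ≤ -ε)
    (hpair : ∀ i j : Fin (n+2), i ≠ j → ⟪v i, v j⟫_ℝ ≤ 0)
    (h1 : ε ≤ ‖v 1‖) : False := by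
  have hval0 : ((0 : Fin (n+2)) : ℕ) = 0 := rfl
  have hval1 : ((1 : Fin (n+2)) : ℕ) = 1 := rfl
  set i2 : Fin (n+2) := ⟨2, by omega⟩ with hi2
  have h02 : ⟪v 0, v i2⟫_ℝ ≤ -ε := h0 i2 (by simp [hi2])
  have hv0 : v 0 ≠ 0 := by
    intro h
    rw [h, inner_zero_left] at h02
    linarith
  have hn0 : (0:ℝ) < ‖v 0‖^2 := by
    have := norm_pos_iff.mpr hv0
    positivity
  have hn1 : ‖v 0‖^2 ≤ 1 := by
    have := hnorm 0
    nlinarith [norm_nonneg (v 0)]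
  set W : Fin (n+2) → EuclideanSpace ℝ (Fin n) :=
    fun i => v i - (⟪v 0, v i⟫_ℝ / ‖v 0‖^2) • v 0 with hW
  have hWin : ∀ i j, ⟪W i, W j⟫_ℝ
      = ⟪v i, v j⟫_ℝ - ⟪v 0, v i⟫_ℝ * ⟪v 0, v j⟫_ℝ / ‖v 0‖^2 :=
    fun i j => proj_inner (v 0) (v i) (v j) hv0
  have h0le : ∀ i : Fin (n+2), 1 ≤ (i:ℕ) → ⟪v 0, v i⟫_ℝ ≤ 0 := by
    intro i hi
    rcases le_or_gt 2 (i:ℕ) with h | h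
    · linarith [h0 i h]
    · exact hpair 0 i (by intro hcon; rw [← hcon, hval0] at hi; omega)
  have hWneg : ∀ i j : Fin (n+2), i ≠ j → 2 ≤ (i:ℕ) → 2 ≤ (j:ℕ) →
      ⟪W i, W j⟫_ℝ ≤ -(ε^2) := by
    intro i j hij hi hj
    have hvij := hpair i j hij
    have hi' := h0 i hi
    have hj' := h0 j hj
    rw [hWin]
    have hdd : ε^2 ≤ ⟪v 0, v i⟫_ℝ * ⟪v 0, v j⟫_ℝ / ‖v 0‖^2 := by
      rw [le_div_iff₀ hn0]
      nlinarith
    linarith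
  have hWpair : ∀ i j : Fin (n+2), i ≠ j → 1 ≤ (i:ℕ) → 1 ≤ (j:ℕ) →
      ⟪W i, W j⟫_ℝ ≤ 0 := by
    intro i j hij hi hj
    have hvij := hpair i j hij
    have h0i := h0le i hi
    have h0j := h0le j hj
    rw [hWin]
    have : (0:ℝ) ≤ ⟪v 0, v i⟫_ℝ * ⟪v 0, v j⟫_ℝ / ‖v 0‖^2 :=
      div_nonneg (by nlinarith) hn0.le
    linarith
  -- the projected vectors lie in the orthogonal complement of v 0
  set K : Submodule ℝ (EuclideanSpace ℝ (Fin n)) := (ℝ ∙ (v 0))ᗮ with hK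
  have hWmem : ∀ i, W i ∈ K := by
    intro i
    rw [hK]
    rw [Submodule.mem_orthogonal_singleton_iff_inner_right]
    exact proj_orth (v 0) (v i) hv0
  haveI : Fact (Module.finrank ℝ (EuclideanSpace ℝ (Fin n)) = (n-1) + 1) :=
    ⟨by rw [finrank_euclideanSpace_fin]; omega⟩
  have hKrank : Module.finrank ℝ K = n - 1 := Submodule.finrank_orthogonal_span_singleton hv0
  set shift : Fin n → Fin (n+2) := fun k => ⟨(k:ℕ)+1, by omega⟩ with hshift
  set g : Fin n → K := fun k => ⟨W (shift k), hWmem _⟩ with hg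
  have hdep : ¬ LinearIndependent ℝ g := by
    intro h
    have := h.fintype_card_le_finrank
    rw [Fintype.card_fin, hKrank] at this
    omega
  obtain ⟨c, hc0, i₀, hi₀⟩ := Fintype.not_linearIndependent_iff.mp hdep
  have hsum : ∑ k, c k • W (shift k) = 0 := by
    have := congrArg (fun z : K => (z : EuclideanSpace ℝ (Fin n))) hc0
    simpa [hg] using this
  set P := Finset.univ.filter (fun k : Fin n => 0 < c k) with hP
  set Ng := Finset.univ.filter (fun k : Fin n => c k < 0) with hNg
  have hPN : Disjoint P Ng := by
    rw [Finset.disjoint_left]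
    intro k hk1 hk2
    rw [hP, Finset.mem_filter] at hk1
    rw [hNg, Finset.mem_filter] at hk2
    linarith [hk1.2, hk2.2]
  set z : EuclideanSpace ℝ (Fin n) := ∑ k ∈ P, c k • W (shift k) with hz
  set z' : EuclideanSpace ℝ (Fin n) := ∑ k ∈ Ng, (-(c k)) • W (shift k) with hz'
  have hunion : ∑ k ∈ P ∪ Ng, c k • W (shift k) = 0 := by
    rw [← hsum]
    apply Finset.sum_subset (Finset.subset_univ _)
    intro k _ hk
    rw [Finset.mem_union, hP, hNg, Finset.mem_filter, Finset.mem_filter] at hk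
    push_neg at hk
    have : c k = 0 := le_antisymm (hk.1 (Finset.mem_univ k)) (hk.2 (Finset.mem_univ k))
    rw [this, zero_smul]
  have hzz : z = z' := by
    rw [Finset.sum_union hPN] at hunion
    have h1' : z' = -∑ k ∈ Ng, c k • W (shift k) := by
      simp [hz', neg_smul]
    rw [h1']
    exact eq_neg_of_add_eq_zero_left hunion
  have hshval : ∀ k : Fin n, ((shift k : Fin (n+2)) : ℕ) = (k:ℕ)+1 := fun k => rfl
  have hknei : ∀ k j : Fin n, k ≠ j → shift k ≠ shift j := by
    intro k j hkj hcon
    apply hkj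
    have : ((shift k : Fin (n+2)) : ℕ) = ((shift j : Fin (n+2)) : ℕ) := by rw [hcon]
    simp only [hshift] at this
    exact Fin.ext (by omega)
  have hzneg : ⟪z, z'⟫_ℝ ≤ 0 := by
    have hexp : ⟪z, z'⟫_ℝ
        = ∑ k ∈ P, ∑ j ∈ Ng, c k * ((-(c j)) * ⟪W (shift k), W (shift j)⟫_ℝ) := by
      rw [hz, hz', sum_inner]
      refine Finset.sum_congr rfl fun k _ => ?_
      rw [real_inner_smul_left, inner_sum, Finset.mul_sum]
      exact Finset.sum_congr rfl fun j _ => by rw [real_inner_smul_right]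
    rw [hexp]
    apply Finset.sum_nonpos
    intro k hk
    apply Finset.sum_nonpos
    intro j hj
    have hck : 0 < c k := (Finset.mem_filter.mp hk).2
    have hcj : c j < 0 := (Finset.mem_filter.mp hj).2
    have hkj : k ≠ j := by
      intro hcon
      exact (Finset.disjoint_left.mp hPN hk) (hcon ▸ hj)
    have hin : ⟪W (shift k), W (shift j)⟫_ℝ ≤ 0 :=
      hWpair _ _ (hknei k j hkj) (by rw [hshval]; omega) (by rw [hshval]; omega)
    have heq : c k * (-(c j) * ⟪W (shift k), W (shift j)⟫_ℝ)
        = (c k * -(c j)) * ⟪W (shift k), W (shift j)⟫_ℝ := by ring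
    rw [heq]
    exact mul_nonpos_iff.mpr (Or.inl ⟨mul_nonneg hck.le (neg_pos.mpr hcj).le, hin⟩)
  have hz0 : z = 0 := by
    have hzz2 : ⟪z, z⟫_ℝ ≤ 0 := by rw [hzz] at hzneg ⊢; exact hzz ▸ hzneg
    have := real_inner_self_nonneg (x := z)
    exact inner_self_eq_zero.mp (le_antisymm hzz2 this)
  have hz'0 : z' = 0 := hzz ▸ hz0
  set u : Fin (n+2) := ⟨n+1, by omega⟩ with hu
  have huval : ((u : Fin (n+2)) : ℕ) = n+1 := rfl
  have hshiftne : ∀ k : Fin n, shift k ≠ u := by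
    intro k hcon
    have : ((shift k : Fin (n+2)) : ℕ) = ((u : Fin (n+2)) : ℕ) := by rw [hcon]
    simp only [hshift, hu] at this
    omega
  -- positive part coefficients vanish except possibly at index 0
  have hPz : ∀ k ∈ P, (k:ℕ) = 0 := by
    intro k hk
    by_contra hk0
    have hzero : ∑ k ∈ P, c k * ⟪W (shift k), W u⟫_ℝ = 0 := by
      have hexp : ⟪z, W u⟫_ℝ = ∑ k ∈ P, c k * ⟪W (shift k), W u⟫_ℝ := by
        rw [hz, sum_inner]
        exact Finset.sum_congr rfl fun k _ => by rw [real_inner_smul_left]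
      rw [hz0, inner_zero_left] at hexp
      exact hexp.symm
    have hterms : ∀ j ∈ P, c j * ⟪W (shift j), W u⟫_ℝ ≤ 0 := by
      intro j hj
      have hcj : 0 < c j := (Finset.mem_filter.mp hj).2
      have hin : ⟪W (shift j), W u⟫_ℝ ≤ 0 :=
        hWpair _ _ (hshiftne j) (by rw [hshval]; omega) (by rw [huval]; omega)
      nlinarith
    have heach := (Finset.sum_eq_zero_iff_of_nonpos hterms).mp hzero k hk
    have hck : 0 < c k := (Finset.mem_filter.mp hk).2
    have hin : ⟪W (shift k), W u⟫_ℝ ≤ -(ε^2) :=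
      hWneg _ _ (hshiftne k) (by rw [hshval]; omega) (by rw [huval]; omega)
    have : c k * ⟪W (shift k), W u⟫_ℝ < 0 :=
      mul_neg_of_pos_of_neg hck (lt_of_le_of_lt hin (by nlinarith))
    linarith
  have hNz : ∀ k ∈ Ng, (k:ℕ) = 0 := by
    intro k hk
    by_contra hk0
    have hzero : ∑ k ∈ Ng, (-(c k)) * ⟪W (shift k), W u⟫_ℝ = 0 := by
      have hexp : ⟪z', W u⟫_ℝ = ∑ k ∈ Ng, (-(c k)) * ⟪W (shift k), W u⟫_ℝ := by
        rw [hz', sum_inner]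
        exact Finset.sum_congr rfl fun k _ => by rw [real_inner_smul_left]
      rw [hz'0, inner_zero_left] at hexp
      exact hexp.symm
    have hterms : ∀ j ∈ Ng, (-(c j)) * ⟪W (shift j), W u⟫_ℝ ≤ 0 := by
      intro j hj
      have hcj : c j < 0 := (Finset.mem_filter.mp hj).2
      have hin : ⟪W (shift j), W u⟫_ℝ ≤ 0 :=
        hWpair _ _ (hshiftne j) (by rw [hshval]; omega) (by rw [huval]; omega)
      nlinarith
    have heach := (Finset.sum_eq_zero_iff_of_nonpos hterms).mp hzero k hk
    have hck : c k < 0 := (Finset.mem_filter.mp hk).2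
    have hin : ⟪W (shift k), W u⟫_ℝ ≤ -(ε^2) :=
      hWneg _ _ (hshiftne k) (by rw [hshval]; omega) (by rw [huval]; omega)
    have : (-(c k)) * ⟪W (shift k), W u⟫_ℝ < 0 :=
      mul_neg_of_pos_of_neg (neg_pos.mpr hck) (lt_of_le_of_lt hin (by nlinarith))
    linarith
  have hkzero : ∀ k : Fin n, (k:ℕ) ≠ 0 → c k = 0 := by
    intro k hk
    rcases lt_trichotomy (c k) 0 with h | h | h
    · exact absurd (hNz k (Finset.mem_filter.mpr ⟨Finset.mem_univ k, h⟩)) hk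
    · exact h
    · exact absurd (hPz k (Finset.mem_filter.mpr ⟨Finset.mem_univ k, h⟩)) hk
  have hi₀0 : (i₀:ℕ) = 0 := by
    by_contra h
    exact hi₀ (hkzero _ h)
  have hsingle : ∑ k, c k • W (shift k) = c i₀ • W (shift i₀) :=
    Finset.sum_eq_single_of_mem i₀ (Finset.mem_univ _) (fun k _ hkne => by
      have : (k:ℕ) ≠ 0 := by
        intro h
        exact hkne (Fin.ext (by omega))
      rw [hkzero k this, zero_smul])
  have hWone : W 1 = 0 := by
    have h' : c i₀ • W (shift i₀) = 0 := hsingle ▸ hsum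
    rcases smul_eq_zero.mp h' with h | h
    · exact absurd h hi₀
    · have hs1 : shift i₀ = 1 := Fin.ext (by simp [hshift, hi₀0])
      rwa [hs1] at h
  have hv1 : v 1 = (⟪v 0, v 1⟫_ℝ / ‖v 0‖^2) • v 0 := by
    have := hWone
    rw [hW] at this
    exact sub_eq_zero.mp this
  set t : ℝ := ⟪v 0, v 1⟫_ℝ / ‖v 0‖^2 with htdef
  have h01 : ⟪v 0, v 1⟫_ℝ ≤ 0 := h0le 1 (by rw [hval1])
  have ht : t ≤ 0 := div_nonpos_of_nonpos_of_nonneg h01 hn0.le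
  have hv1ne : v 1 ≠ 0 := by
    intro h
    rw [h, norm_zero] at h1
    linarith
  have tne : t ≠ 0 := by
    intro h
    rw [h, zero_smul] at hv1
    exact hv1ne hv1
  have tlt : t < 0 := lt_of_le_of_ne ht tne
  have hfin : ⟪v 1, v i2⟫_ℝ = t * ⟪v 0, v i2⟫_ℝ := by
    rw [hv1, real_inner_smul_left]
  have hpos : 0 < ⟪v 1, v i2⟫_ℝ := by
    rw [hfin]
    exact mul_pos_of_neg_of_neg tlt (by linarith)
  have hle := hpair 1 i2 (by
    intro h
    have : ((1 : Fin (n+2)) : ℕ) = (i2:ℕ) := by rw [h]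
    rw [hval1, hi2] at this
    simp at this)
  linarith

lemma key_lemma (n : ℕ) (hn : 2 ≤ n) (ε : ℝ) (hε : 0 < ε) :
    ∃ δ > (0:ℝ), ¬ ∃ v : Fin (n+2) → EuclideanSpace ℝ (Fin n),
      (∀ i, ‖v i‖ ≤ 1) ∧
      (∀ i : Fin (n+2), 2 ≤ (i:ℕ) → ⟪v 0, v i⟫_ℝ < -ε) ∧
      (∀ i j : Fin (n+2), i ≠ j → ⟪v i, v j⟫_ℝ < δ) ∧
      ε < ‖v 1‖ := by
  by_contra hcon
  push_neg at hcon
  have hex : ∀ k : ℕ, ∃ v : Fin (n+2) → EuclideanSpace ℝ (Fin n),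
      (∀ i, ‖v i‖ ≤ 1) ∧
      (∀ i : Fin (n+2), 2 ≤ (i:ℕ) → ⟪v 0, v i⟫_ℝ < -ε) ∧
      (∀ i j : Fin (n+2), i ≠ j → ⟪v i, v j⟫_ℝ < 1/(k+1)) ∧
      ε < ‖v 1‖ := fun k => hcon (1/(k+1)) (by positivity)
  choose v hv using hex
  set s : Set (Fin (n+2) → EuclideanSpace ℝ (Fin n)) :=
    Set.univ.pi (fun _ => Metric.closedBall 0 1) with hs
  have hscomp : IsCompact s := isCompact_univ_pi (fun _ => isCompact_closedBall _ _)
  have hmem : ∀ k, v k ∈ s := by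
    intro k
    rw [hs, Set.mem_univ_pi]
    intro i
    rw [Metric.mem_closedBall, dist_zero_right]
    exact (hv k).1 i
  obtain ⟨L, hLs, φ, hφ, hconv⟩ := hscomp.tendsto_subseq hmem
  have hci : ∀ i, Tendsto (fun k => v (φ k) i) atTop (𝓝 (L i)) := by
    intro i
    exact (tendsto_pi_nhds.mp hconv) i
  have hLnorm : ∀ i, ‖L i‖ ≤ 1 := by
    intro i
    have := hLs
    rw [hs, Set.mem_univ_pi] at this
    have := this i
    rwa [Metric.mem_closedBall, dist_zero_right] at this
  have hL0 : ∀ i : Fin (n+2), 2 ≤ (i:ℕ) → ⟪L 0, L i⟫_ℝ ≤ -ε := by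
    intro i hi
    refine le_of_tendsto ((hci 0).inner (hci i)) ?_
    filter_upwards with k
    exact ((hv (φ k)).2.1 i hi).le
  have hLpair : ∀ i j : Fin (n+2), i ≠ j → ⟪L i, L j⟫_ℝ ≤ 0 := by
    intro i j hij
    refine le_of_tendsto_of_tendsto' ((hci i).inner (hci j))
      tendsto_one_div_add_atTop_nhds_zero_nat ?_
    intro k
    have h1 : ⟪v (φ k) i, v (φ k) j⟫_ℝ < 1/(φ k + 1) := (hv (φ k)).2.2.1 i j hij
    have h2 : (1:ℝ)/(φ k + 1) ≤ 1/(k+1) := by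
      apply one_div_le_one_div_of_le
      · positivity
      · have : (k:ℝ) ≤ (φ k : ℝ) := Nat.cast_le.mpr hφ.le_apply
        linarith
    linarith
  have hL1 : ε ≤ ‖L 1‖ := by
    refine ge_of_tendsto ((hci 1).norm) ?_
    filter_upwards with k
    exact ((hv (φ k)).2.2.2).le
  exact exact_lemma n hn ε hε L hLnorm hL0 hLpair hL1


lemma inner_le_one' {E : Type*} [NormedAddCommGroup E] [InnerProductSpace ℝ E]
    {x y : E} (hx : ‖x‖ = 1) (hy : ‖y‖ = 1) : ⟪x, y⟫_ℝ ≤ 1 := by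
  have := real_inner_le_norm x y
  rw [hx, hy] at this
  linarith

lemma neg_one_le_inner' {E : Type*} [NormedAddCommGroup E] [InnerProductSpace ℝ E]
    {x y : E} (hx : ‖x‖ = 1) (hy : ‖y‖ = 1) : -1 ≤ ⟪x, y⟫_ℝ := by
  have := abs_real_inner_le_norm x y
  rw [hx, hy] at this
  cases abs_le.mp this
  linarith

lemma norm_of_mem_sphere' {n : ℕ} {a : EuclideanSpace ℝ (Fin n)}
    (h : a ∈ Metric.sphere (0 : EuclideanSpace ℝ (Fin n)) 1) : ‖a‖ = 1 := by
  rwa [mem_sphere_zero_iff_norm] at h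

lemma bddAbove_inner_image {n : ℕ} (g : DERData n) (α : Fin g.m)
    {x : EuclideanSpace ℝ (Fin n)} (hx : ‖x‖ = 1) :
    BddAbove ((fun a => ⟪a, x⟫_ℝ) '' g.A α) := by
  refine ⟨1, ?_⟩
  rintro y ⟨a, ha, rfl⟩
  exact inner_le_one' (norm_of_mem_sphere' (g.subset_sphere α ha)) hx

lemma toFun_le_one {n : ℕ} (g : DERData n) {x : EuclideanSpace ℝ (Fin n)}
    (hx : ‖x‖ = 1) : g.toFun x ≤ 1 := by
  unfold DERData.toFun
  have hterm : ∀ α ∈ Finset.univ, -(g.w α * sSup ((fun a => ⟪a, x⟫_ℝ) '' g.A α)) ≤ g.w α := by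
    intro α _
    have ha0 := (g.nonempty' α).some_mem
    have hs : -1 ≤ sSup ((fun a => ⟪a, x⟫_ℝ) '' g.A α) := by
      refine le_trans ?_ (le_csSup (bddAbove_inner_image g α hx) ⟨_, ha0, rfl⟩)
      exact neg_one_le_inner' (norm_of_mem_sphere' (g.subset_sphere α ha0)) hx
    nlinarith [g.nonneg α]
  calc -∑ α, g.w α * sSup ((fun a => ⟪a, x⟫_ℝ) '' g.A α)
      = ∑ α, -(g.w α * sSup ((fun a => ⟪a, x⟫_ℝ) '' g.A α)) := by
        rw [Finset.sum_neg_distrib]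
    _ ≤ ∑ α, g.w α := Finset.sum_le_sum hterm
    _ ≤ 1 := g.sum_le_one

theorem stmt_0 (n : ℕ) (hn : 2 ≤ n) (ε : ℝ) (hε : ε ∈ Set.Ioo (0 : ℝ) 1) :
    ∃ δ > (0 : ℝ), ¬ ∃ f : Fin (n + 2) → DERData n,
      (∀ i : Fin (n + 2), 2 ≤ (i : ℕ) → (f 0).sprod (f i) < -ε) ∧
      (∀ i j : Fin (n + 2), i ≠ j → (f i).sprod (f j) < δ) ∧
      ε < sSup ((f 1).toFun '' Metric.sphere (0 : EuclideanSpace ℝ (Fin n)) 1) := by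
  obtain ⟨hε0, hε1⟩ := hε
  obtain ⟨δ, hδ, hkey⟩ := key_lemma n hn ε hε0
  refine ⟨δ, hδ, ?_⟩
  rintro ⟨f, hf0, hfpair, hfsup⟩
  apply hkey
  have hsph : (Metric.sphere (0 : EuclideanSpace ℝ (Fin n)) 1).Nonempty := by
    refine ⟨EuclideanSpace.single (⟨0, by omega⟩ : Fin n) (1:ℝ), ?_⟩
    rw [mem_sphere_zero_iff_norm, EuclideanSpace.norm_single]
    norm_num
  have hbdd : BddAbove ((f 1).toFun '' Metric.sphere (0 : EuclideanSpace ℝ (Fin n)) 1) := by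
    refine ⟨1, ?_⟩
    rintro y ⟨x', hx', rfl⟩
    exact toFun_le_one (f 1) (norm_of_mem_sphere' hx')
  obtain ⟨y, hymem, hylt⟩ := (lt_csSup_iff hbdd (hsph.image _)).mp hfsup
  obtain ⟨x, hxs, rfl⟩ := hymem
  have hx1 : ‖x‖ = 1 := norm_of_mem_sphere' hxs
  -- choose maximizers of ⟪·, x⟫ on each set
  have hmax : ∀ (i : Fin (n+2)) (α : Fin (f i).m),
      ∃ q, q ∈ (f i).A α ∧ ∀ a ∈ (f i).A α, ⟪a, x⟫_ℝ ≤ ⟪q, x⟫_ℝ := by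
    intro i α
    obtain ⟨q, hq, hqmax⟩ := ((f i).compact' α).exists_isMaxOn ((f i).nonempty' α)
      (Continuous.continuousOn
        (show Continuous fun a : EuclideanSpace ℝ (Fin n) => ⟪a, x⟫_ℝ from
          Continuous.inner continuous_id continuous_const))
    exact ⟨q, hq, fun a ha => hqmax ha⟩
  choose p hpmem hpmax using hmax
  set V : Fin (n+2) → EuclideanSpace ℝ (Fin n) := fun i => ∑ α, (f i).w α • p i α with hV
  have hpn : ∀ i α, ‖p i α‖ = 1 := fun i α =>
    norm_of_mem_sphere' ((f i).subset_sphere α (hpmem i α))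
  have hVnorm : ∀ i, ‖V i‖ ≤ 1 := by
    intro i
    calc ‖V i‖ ≤ ∑ α, ‖(f i).w α • p i α‖ := norm_sum_le _ _
      _ = ∑ α, (f i).w α := by
          refine Finset.sum_congr rfl fun α _ => ?_
          rw [norm_smul, hpn, mul_one, Real.norm_eq_abs, abs_of_nonneg ((f i).nonneg α)]
      _ ≤ 1 := (f i).sum_le_one
  have hVsprod : ∀ i j, ⟪V i, V j⟫_ℝ ≤ (f i).sprod (f j) := by
    intro i j
    rw [hV]
    simp only
    rw [sum_inner]
    unfold DERData.sprod
    apply Finset.sum_le_sum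
    intro α _
    rw [real_inner_smul_left, inner_sum, Finset.mul_sum]
    apply Finset.sum_le_sum
    intro β _
    rw [real_inner_smul_right]
    have hle : ⟪p i α, p j β⟫_ℝ
        ≤ sSup (Set.image2 (fun a b => ⟪a, b⟫_ℝ) ((f i).A α) ((f j).A β)) := by
      apply le_csSup
      · refine ⟨1, ?_⟩
        rintro y ⟨a, ha, b, hb, rfl⟩
        exact inner_le_one' (norm_of_mem_sphere' ((f i).subset_sphere α ha))
          (norm_of_mem_sphere' ((f j).subset_sphere β hb))
      · exact Set.mem_image2_of_mem (hpmem i α) (hpmem j β)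
    have hwa := (f i).nonneg α
    have hwb := (f j).nonneg β
    calc (f i).w α * ((f j).w β * ⟪p i α, p j β⟫_ℝ)
        = ((f i).w α * (f j).w β) * ⟪p i α, p j β⟫_ℝ := by ring
      _ ≤ ((f i).w α * (f j).w β) *
          sSup (Set.image2 (fun a b => ⟪a, b⟫_ℝ) ((f i).A α) ((f j).A β)) :=
            mul_le_mul_of_nonneg_left hle (mul_nonneg hwa hwb)
  have hsSup_eq : ∀ β, sSup ((fun a => ⟪a, x⟫_ℝ) '' (f 1).A β) = ⟪p 1 β, x⟫_ℝ := by
    intro β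
    apply IsGreatest.csSup_eq
    exact ⟨⟨p 1 β, hpmem 1 β, rfl⟩, by rintro y ⟨a, ha, rfl⟩; exact hpmax 1 β a ha⟩
  have hV1x : ⟪V 1, x⟫_ℝ < -ε := by
    rw [hV]
    simp only
    rw [sum_inner]
    have heq : ∑ β, ⟪(f 1).w β • p 1 β, x⟫_ℝ
        = ∑ β, (f 1).w β * sSup ((fun a => ⟪a, x⟫_ℝ) '' (f 1).A β) := by
      refine Finset.sum_congr rfl fun β _ => ?_
      rw [real_inner_smul_left, hsSup_eq]
    rw [heq]
    unfold DERData.toFun at hylt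
    linarith
  have hV1 : ε < ‖V 1‖ := by
    have habs := abs_real_inner_le_norm (V 1) x
    rw [hx1, mul_one] at habs
    calc ε < -⟪V 1, x⟫_ℝ := by linarith
      _ ≤ |⟪V 1, x⟫_ℝ| := neg_le_abs _
      _ ≤ ‖V 1‖ := habs
  exact ⟨V, hVnorm, fun i hi => lt_of_le_of_lt (hVsprod 0 i) (hf0 i hi),
    fun i j hij => lt_of_le_of_lt (hVsprod i j) (hfpair i j hij), hV1⟩


end
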